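/- Let X have EEW(α, nβ) distribution with density g_n(x) = nαβ h(x) e^{-αH(x)}(1-e^{-αH(x)})^{nβ-1}. Then its Laplace transform satisfies L_n(s) = Σ_{j=0}^∞ binom(nβ, j+1) (-1)^j L^{(j)}(s), where L^{(j)}(s) is the Laplace transform of the EEW(α(j+1), 1) distribution (density α(j+1) h(x) e^{-α(j+1)H(x)}). -/

import Mathlib

open MeasureTheory Set

/-- Generalized binomial coefficient `binom r k = r (r-1) ⋯ (r-k+1) / k!`. -/
noncomputable def genBinom (r : ℝ) (k : ℕ) : ℝ :=
  (∏ i ∈ Finset.range k, (r - i)) / (Nat.factorial k)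



lemma genBinom_succ (r : ℝ) (k : ℕ) :
    genBinom r (k+1) = genBinom r k * (r - k) / (k+1) := by
  have hk : (Nat.factorial k : ℝ) ≠ 0 := by positivity
  have hk1 : ((k:ℝ)+1) ≠ 0 := by positivity
  simp only [genBinom, Finset.prod_range_succ, Nat.factorial_succ, Nat.cast_mul,
    Nat.cast_add, Nat.cast_one]
  rw [div_eq_div_iff (by positivity) (by positivity)]
  field_simp

lemma succ_mul_genBinom (r : ℝ) (k : ℕ) :
    ((k:ℝ)+1) * genBinom r (k+1) = (r - k) * genBinom r k := by
  rw [genBinom_succ]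
  have h : ((k:ℝ)+1) ≠ 0 := by positivity
  field_simp

lemma summable_genBinom_aux (t : ℝ) {x : ℝ} (hx0 : 0 < x) (hx1 : x < 1) :
    Summable (fun m : ℕ => ((m:ℝ)+1) * |genBinom t m| * x ^ m) := by
  obtain ⟨r, hxr, hr1⟩ : ∃ r, x < r ∧ r < 1 := ⟨(1+x)/2, by linarith, by linarith⟩
  apply summable_of_ratio_norm_eventually_le hr1
  filter_upwards [tendsto_natCast_atTop_atTop.eventually_ge_atTop (2*x*(|t|+1)/(r-x))]
    with m (hm : 2*x*(|t|+1)/(r-x) ≤ (m:ℝ))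
  have hmb : 2*x*(|t|+1) ≤ (r-x)*(m:ℝ) := by
    rw [div_le_iff₀ (by linarith)] at hm; linarith
  have hm1 : (0:ℝ) < (m:ℝ)+1 := by positivity
  have hmul : ((m:ℝ)+1) * |genBinom t (m+1)| = |t - m| * |genBinom t m| := by
    rw [genBinom_succ, abs_div, abs_mul]
    rw [abs_of_pos hm1]
    field_simp
  have htm : |t - (m:ℝ)| ≤ (m:ℝ) + |t| := by
    calc |t - (m:ℝ)| ≤ |t| + |(m:ℝ)| := abs_sub _ _
    _ = (m:ℝ) + |t| := by rw [abs_of_nonneg (by positivity : (0:ℝ) ≤ (m:ℝ))]; ring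
  simp only [norm_mul, norm_pow, Real.norm_eq_abs, abs_abs]
  push_cast
  rw [abs_of_nonneg (show (0:ℝ) ≤ (m:ℝ)+1+1 by positivity),
      abs_of_nonneg (show (0:ℝ) ≤ (m:ℝ)+1 by positivity),
      abs_of_pos hx0, pow_succ]
  have hB : 0 ≤ |genBinom t m| := abs_nonneg _
  have hX : 0 ≤ x ^ m := by positivity
  have key : ((m:ℝ)+1+1) * |t - m| * x ≤ r * (((m:ℝ)+1)*((m:ℝ)+1)) := by
    nlinarith [mul_le_mul_of_nonneg_left hmb (Nat.cast_nonneg m : (0:ℝ) ≤ (m:ℝ)),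
      mul_le_mul_of_nonneg_right htm (mul_nonneg (Nat.cast_nonneg m : (0:ℝ) ≤ (m:ℝ)) hx0.le),
      mul_le_mul_of_nonneg_right htm hx0.le,
      abs_nonneg (t - (m:ℝ)), abs_nonneg t, hx0.le,
      mul_nonneg (abs_nonneg t) hx0.le]
  rw [← mul_le_mul_iff_right₀ hm1]
  calc ((m:ℝ)+1) * (((m:ℝ)+1+1) * |genBinom t (m+1)| * (x ^ m * x))
      = (((m:ℝ)+1+1) * x) * (((m:ℝ)+1) * |genBinom t (m+1)|) * x ^ m := by ring
    _ = (((m:ℝ)+1+1) * |t - m| * x) * (|genBinom t m| * x ^ m) := by rw [hmul]; ring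
    _ ≤ (r * (((m:ℝ)+1)*((m:ℝ)+1))) * (|genBinom t m| * x ^ m) :=
        mul_le_mul_of_nonneg_right key (by positivity)
    _ = ((m:ℝ)+1) * (r * (((m:ℝ)+1) * |genBinom t m| * x ^ m)) := by ring

lemma iterDeriv_formula (t : ℝ) {x : ℝ} (hx0 : 0 < x) (hx1 : x < 1) :
    ∀ m : ℕ, ∀ y ∈ Icc (0:ℝ) x,
      iteratedDerivWithin m (fun y : ℝ => (1-y) ^ t) (Icc 0 x) y
        = (∏ i ∈ Finset.range m, (t - i)) * (-1:ℝ)^m * (1-y)^(t - m) := by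
  have hud : UniqueDiffOn ℝ (Icc (0:ℝ) x) := uniqueDiffOn_Icc hx0
  intro m
  induction m with
  | zero => intro y hy; simp
  | succ m ih =>
    intro y hy
    have h1y : ∀ z ∈ Icc (0:ℝ) x, (0:ℝ) < 1 - z := fun z hz => by
      have := hz.2; simp only [mem_Icc] at hz; linarith
    have hder : ∀ z ∈ Icc (0:ℝ) x, HasDerivAt
        (fun y : ℝ => (∏ i ∈ Finset.range m, (t - i)) * (-1:ℝ)^m * (1-y)^(t - m))
        ((∏ i ∈ Finset.range (m+1), (t - i)) * (-1:ℝ)^(m+1) * (1-z)^(t - (m+1))) z := by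
      intro z hz
      have hd : HasDerivAt (fun y : ℝ => (1-y)^(t - m))
          ((t - m) * (1-z)^(t - m - 1) * (-1)) z := by
        have hb : HasDerivAt (fun y : ℝ => 1 - y) (-1) z := by
          simpa using (hasDerivAt_id z).const_sub 1
        have := hb.rpow_const (p := t - m) (Or.inl (h1y z hz).ne')
        convert this using 1
        ring
      have := hd.const_mul ((∏ i ∈ Finset.range m, (t - i)) * (-1:ℝ)^m)
      convert this using 1
      · rfl
      · rfl
      have he : t - ((m:ℝ)+1) = t - m - 1 := by ring
      rw [Finset.prod_range_succ, pow_succ]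
      push_cast
      rw [he]
      ring
    rw [iteratedDerivWithin_succ]
    rw [derivWithin_congr (fun z hz => ih z hz) (ih y hy)]
    have := ((hder y hy).hasDerivWithinAt).derivWithin (hud.uniqueDiffWithinAt hy)
    rw [this]
    norm_num


lemma hasSum_genBinom (t : ℝ) {x : ℝ} (hx0 : 0 < x) (hx1 : x < 1) :
    HasSum (fun j : ℕ => genBinom t j * (-x) ^ j) ((1 - x) ^ t) := by
  have hA := summable_genBinom_aux t hx0 hx1
  have hterm : ∀ j : ℕ, ‖genBinom t j * (-x) ^ j‖ ≤ ((j:ℝ)+1) * |genBinom t j| * x ^ j := by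
    intro j
    rw [norm_mul, norm_pow, norm_neg, Real.norm_eq_abs, Real.norm_eq_abs, abs_of_pos hx0]
    nlinarith [abs_nonneg (genBinom t j), pow_nonneg hx0.le j,
      mul_nonneg (abs_nonneg (genBinom t j)) (pow_nonneg hx0.le j)]
  have hsum : Summable (fun j : ℕ => genBinom t j * (-x) ^ j) :=
    Summable.of_norm_bounded hA hterm
  have hgenfact : ∀ k : ℕ, genBinom t k = (∏ i ∈ Finset.range k, (t - i)) / (Nat.factorial k) :=
    fun k => rfl
  set f : ℝ → ℝ := fun y => (1 - y) ^ t with hf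
  have h1y : ∀ z ∈ Icc (0:ℝ) x, (0:ℝ) < 1 - z := fun z hz => by
    simp only [mem_Icc] at hz; linarith [hz.2]
  have hcd : ∀ m : ℕ, ContDiffOn ℝ m f (Icc 0 x) := by
    intro m z hz
    exact ((Real.contDiffAt_rpow_const_of_ne (h1y z hz).ne').comp z
      ((contDiff_const.sub contDiff_id).contDiffAt)).contDiffWithinAt
  have hform : ∀ m : ℕ, ∀ y ∈ Icc (0:ℝ) x,
      iteratedDerivWithin m f (Icc 0 x) y
        = (∏ i ∈ Finset.range m, (t - i)) * (-1:ℝ)^m * (1-y)^(t - m) :=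
    iterDeriv_formula t hx0 hx1
  have hP : ∀ m : ℕ, taylorWithinEval f m (Icc 0 x) 0 x
      = ∑ k ∈ Finset.range (m+1), genBinom t k * (-x) ^ k := by
    intro m
    rw [taylor_within_apply]
    refine Finset.sum_congr rfl fun k hk => ?_
    rw [hform k 0 (left_mem_Icc.2 hx0.le)]
    have h10 : (1:ℝ) - (0:ℝ) = 1 := by ring
    rw [h10, Real.one_rpow, smul_eq_mul, hgenfact k, neg_pow, sub_zero, mul_one]
    have : (Nat.factorial k : ℝ) ≠ 0 := by positivity
    field_simp
    ring
  set K : ℝ := max 1 ((1 - x) ^ (t - 1)) with hK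
  have hK0 : (0:ℝ) ≤ K := le_trans zero_le_one (le_max_left _ _)
  have hKb : ∀ ξ ∈ Ioo (0:ℝ) x, (1 - ξ) ^ (t - 1) ≤ K := by
    intro ξ hξ
    rcases le_or_gt 1 t with ht | ht
    · refine le_trans (Real.rpow_le_one (by nlinarith [hξ.2]) (by nlinarith [hξ.1]) (by linarith)) (le_max_left _ _)
    · refine le_trans (Real.rpow_le_rpow_of_nonpos (by linarith) (by nlinarith [hξ.2]) (by linarith)) (le_max_right _ _)
  have hbound : ∀ m : ℕ, |f x - taylorWithinEval f m (Icc 0 x) 0 x|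
      ≤ K * ((((m+1:ℕ):ℝ)+1) * |genBinom t (m+1)| * x ^ (m+1)) := by
    intro m
    have hdiff : DifferentiableOn ℝ (iteratedDerivWithin m f (Icc 0 x)) (Ioo 0 x) := by
      intro z hz
      have hz' : z ∈ Icc (0:ℝ) x := Ioo_subset_Icc_self hz
      have hb : HasDerivAt (fun y : ℝ => 1 - y) (-1) z := by
        simpa using (hasDerivAt_id z).const_sub 1
      have hg : DifferentiableAt ℝ (fun y : ℝ =>
          (∏ i ∈ Finset.range m, (t - i)) * (-1:ℝ)^m * (1-y)^(t - m)) z := by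
        have := (hb.rpow_const (p := t - m) (Or.inl (h1y z hz').ne')).differentiableAt
        exact this.const_mul _
      exact (hg.differentiableWithinAt).congr
        (fun y hy => hform m y (Ioo_subset_Icc_self hy)) (hform m z hz')
    obtain ⟨ξ, hξ, hR⟩ := taylor_mean_remainder_cauchy hx0.ne
      (by rw [uIcc_of_le hx0.le]; exact hcd m) (by rw [uIcc_of_le hx0.le, uIoo_of_le hx0.le]; exact hdiff)
    rw [uIcc_of_le hx0.le] at hR
    rw [uIoo_of_le hx0.le] at hξ
    have hξI : ξ ∈ Icc (0:ℝ) x := Ioo_subset_Icc_self hξ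
    rw [hR, hform (m+1) ξ hξI]
    have hfact : (0:ℝ) < (Nat.factorial m : ℝ) := by positivity
    have h1ξ : (0:ℝ) < 1 - ξ := h1y ξ hξI
    have hxξ : (0:ℝ) ≤ x - ξ := by nlinarith [hξ.2]
    have e1 : |(∏ i ∈ Finset.range (m+1), (t - i)) * (-1:ℝ)^(m+1) * (1-ξ)^(t - ((m+1:ℕ):ℝ)) * (x - ξ)^m / (Nat.factorial m : ℝ) * (x - 0)|
        = |∏ i ∈ Finset.range (m+1), (t - i)| * ((1-ξ)^(t - ((m+1:ℕ):ℝ)) * (x - ξ)^m) / (Nat.factorial m : ℝ) * x := by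
      rw [abs_mul, abs_div, abs_mul, abs_mul, abs_mul, abs_pow, abs_neg, abs_one, one_pow, mul_one,
        abs_of_nonneg (Real.rpow_nonneg h1ξ.le _), abs_of_nonneg (pow_nonneg hxξ m),
        abs_of_nonneg hfact.le, sub_zero, abs_of_pos hx0]
      ring
    rw [e1]
    have hPg : |∏ i ∈ Finset.range (m+1), (t - i)| = (((m:ℝ)+1) * (Nat.factorial m : ℝ)) * |genBinom t (m+1)| := by
      have hpe : (∏ i ∈ Finset.range (m+1), (t - i)) = genBinom t (m+1) * ((Nat.factorial (m+1) : ℝ)) := by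
        rw [hgenfact]
        field_simp
      rw [hpe, abs_mul, abs_of_nonneg (by positivity : (0:ℝ) ≤ ((Nat.factorial (m+1) : ℝ))),
        Nat.factorial_succ]
      push_cast
      ring
    rw [hPg]
    have hcore : (1-ξ)^(t - ((m+1:ℕ):ℝ)) * (x - ξ)^m ≤ K * x^m := by
      have h1 : (x - ξ)^m ≤ (x * (1-ξ))^m :=
        pow_le_pow_left₀ hxξ (by nlinarith [hξ.1, hx1]) m
      calc (1-ξ)^(t - ((m+1:ℕ):ℝ)) * (x - ξ)^m
          ≤ (1-ξ)^(t - ((m+1:ℕ):ℝ)) * (x * (1-ξ))^m :=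
            mul_le_mul_of_nonneg_left h1 (Real.rpow_nonneg h1ξ.le _)
        _ = (1-ξ)^(t - ((m+1:ℕ):ℝ)) * (1-ξ)^((m:ℕ):ℝ) * x^m := by
            rw [mul_pow, Real.rpow_natCast]; ring
        _ = (1-ξ)^(t-1) * x^m := by
            rw [← Real.rpow_add h1ξ]
            have he : t - ((m+1:ℕ):ℝ) + ((m:ℕ):ℝ) = t - 1 := by push_cast; ring
            rw [he]
        _ ≤ K * x^m := mul_le_mul_of_nonneg_right (hKb ξ hξ) (by positivity)
    calc (((m:ℝ)+1) * (Nat.factorial m : ℝ)) * |genBinom t (m+1)| * ((1-ξ)^(t - ((m+1:ℕ):ℝ)) * (x - ξ)^m) / (Nat.factorial m : ℝ) * x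
        = (((m:ℝ)+1) * |genBinom t (m+1)| * x) * ((1-ξ)^(t - ((m+1:ℕ):ℝ)) * (x - ξ)^m) := by
          field_simp
      _ ≤ (((m:ℝ)+1) * |genBinom t (m+1)| * x) * (K * x^m) := by
          apply mul_le_mul_of_nonneg_left hcore (by positivity)
      _ ≤ K * ((((m+1:ℕ):ℝ)+1) * |genBinom t (m+1)| * x ^ (m+1)) := by
          push_cast
          rw [pow_succ]
          nlinarith [mul_nonneg (mul_nonneg hK0 (abs_nonneg (genBinom t (m+1))))
            (mul_nonneg (pow_nonneg hx0.le m) hx0.le)]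
  have hBtend : Filter.Tendsto (fun m : ℕ => K * ((((m+1:ℕ):ℝ)+1) * |genBinom t (m+1)| * x ^ (m+1)))
      Filter.atTop (nhds 0) := by
    have h0 := hA.tendsto_atTop_zero
    have h1 := h0.comp (Filter.tendsto_add_atTop_nat 1)
    have h2 := h1.const_mul K
    simpa using h2
  have htend0 : Filter.Tendsto (fun m : ℕ => |f x - taylorWithinEval f m (Icc 0 x) 0 x|)
      Filter.atTop (nhds 0) :=
    squeeze_zero (fun m => abs_nonneg _) hbound hBtend
  have hPtend : Filter.Tendsto (fun m : ℕ => taylorWithinEval f m (Icc 0 x) 0 x)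
      Filter.atTop (nhds (f x)) := by
    rw [tendsto_iff_norm_sub_tendsto_zero]
    simpa [Real.norm_eq_abs, abs_sub_comm] using htend0
  have hStend : Filter.Tendsto (fun m : ℕ => ∑ k ∈ Finset.range (m+1), genBinom t k * (-x) ^ k)
      Filter.atTop (nhds (f x)) := hPtend.congr hP
  have h2 := hsum.hasSum.tendsto_sum_nat.comp (Filter.tendsto_add_atTop_nat 1)
  have h3 : (∑' j : ℕ, genBinom t j * (-x) ^ j) = (1 - x) ^ t :=
    tendsto_nhds_unique h2 hStend
  have := hsum.hasSum
  rwa [h3] at this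

lemma genBinom_shift (r : ℝ) (j : ℕ) :
    ((j:ℝ)+1) * genBinom r (j+1) = r * genBinom (r-1) j := by
  simp only [genBinom]
  have hp : ∏ i ∈ Finset.range (j+1), (r - i) = r * ∏ i ∈ Finset.range j, (r - 1 - i) := by
    rw [Finset.prod_range_succ']
    rw [Finset.prod_congr rfl (fun i _ => show r - ((i:ℕ)+1 : ℕ) = r - 1 - i by push_cast; ring)]
    push_cast
    rw [sub_zero]
    ring
  rw [hp, Nat.factorial_succ]
  have h1 : ((j:ℝ)+1) ≠ 0 := by positivity
  have h2 : (Nat.factorial j : ℝ) ≠ 0 := by positivity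
  push_cast
  field_simp


/-- For `X ∼ EEW(α, nβ)` with density
`g_n x = n α β h x exp (-α H x) (1 - exp (-α H x))^(n β - 1)`, the Laplace transform
satisfies `L_n s = ∑_{j≥0} binom (nβ) (j+1) (-1)^j L^(j) s`, where `L^(j)` is the
Laplace transform of EEW(α(j+1), 1) with density `α (j+1) h x exp (-α (j+1) H x)`. -/
theorem eew_laplace_series
    (α β s : ℝ) (n : ℕ) (H h : ℝ → ℝ)
    (hα : 0 < α) (hβ : 0 < β) (hn : 1 ≤ n) (hs : 0 ≤ s)
    (hh : ∀ x, 0 < x → HasDerivAt H (h x) x)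
    (hHnonneg : ∀ x, 0 ≤ x → 0 ≤ H x)
    (hhpos : ∀ x, 0 < x → 0 ≤ h x)
    (hint : ∀ j : ℕ, IntegrableOn
      (fun x => Real.exp (-(s * x)) *
        (α * (j + 1) * h x * Real.exp (-(α * (j + 1) * H x)))) (Set.Ioi 0))
    (habs : Summable (fun j : ℕ => |genBinom ((n : ℝ) * β) (j + 1)| *
      ∫ x in Set.Ioi (0 : ℝ), Real.exp (-(s * x)) *
        (α * (j + 1) * h x * Real.exp (-(α * (j + 1) * H x))))) :
    HasSum
      (fun j : ℕ => genBinom ((n : ℝ) * β) (j + 1) * (-1) ^ j *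
        ∫ x in Set.Ioi (0 : ℝ), Real.exp (-(s * x)) *
          (α * (j + 1) * h x * Real.exp (-(α * (j + 1) * H x))))
      (∫ x in Set.Ioi (0 : ℝ), Real.exp (-(s * x)) *
        ((n : ℝ) * α * β * h x * Real.exp (-(α * H x)) *
          (1 - Real.exp (-(α * H x))) ^ ((n : ℝ) * β - 1))) := by
  -- H is monotone on (0, ∞)
  have hmono : MonotoneOn H (Ioi (0:ℝ)) := by
    apply monotoneOn_of_deriv_nonneg (convex_Ioi 0)
    · exact fun z hz => (hh z hz).continuousAt.continuousWithinAt
    · rw [interior_Ioi]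
      exact fun z hz => (hh z hz).differentiableAt.differentiableWithinAt
    · rw [interior_Ioi]
      intro z hz
      rw [(hh z hz).deriv]
      exact hhpos z hz
  -- bad set is a subsingleton
  have hkey : ∀ a b : ℝ, (0 < a ∧ H a = 0 ∧ h a ≠ 0) → (0 < b ∧ H b = 0 ∧ h b ≠ 0) →
      a < b → False := by
    intro a b ha hb hab
    have hzero : ∀ z ∈ Ioo (0:ℝ) b, H z = 0 := by
      intro z hz
      have h1 : H z ≤ H b := hmono hz.1 hb.1 hz.2.le
      have h2 : 0 ≤ H z := hHnonneg z hz.1.le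
      rw [hb.2.1] at h1; linarith
    have heq : H =ᶠ[nhds a] (fun _ => (0:ℝ)) := by
      filter_upwards [Ioo_mem_nhds ha.1 hab] with z hz using hzero z hz
    have hd0 : HasDerivAt H 0 a := (hasDerivAt_const a (0:ℝ)).congr_of_eventuallyEq heq
    exact ha.2.2 ((hh a ha.1).unique hd0)
  have hBsub : Set.Subsingleton {x : ℝ | 0 < x ∧ H x = 0 ∧ h x ≠ 0} := by
    intro a ha b hb
    simp only [mem_setOf_eq] at ha hb
    by_contra hne
    rcases lt_or_gt_of_ne hne with hab | hab
    · exact absurd (hkey a b ha hb hab) not_false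
    · exact absurd (hkey b a hb ha hab) not_false
  have hBnull : volume {x : ℝ | 0 < x ∧ H x = 0 ∧ h x ≠ 0} = 0 :=
    hBsub.measure_zero _
  -- pointwise a.e. HasSum identity
  have hae : ∀ᵐ x ∂(volume.restrict (Ioi (0:ℝ))),
      HasSum (fun j : ℕ => genBinom ((n:ℝ)*β) (j+1) * (-1)^j *
          (Real.exp (-(s*x)) * (α*((j:ℝ)+1) * h x * Real.exp (-(α*((j:ℝ)+1)*H x)))))
        (Real.exp (-(s*x)) * ((n:ℝ)*α*β * h x * Real.exp (-(α*H x)) *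
          (1 - Real.exp (-(α*H x))) ^ ((n:ℝ)*β - 1))) := by
    have h1 : ∀ᵐ x ∂(volume : Measure ℝ), x ∉ {x : ℝ | 0 < x ∧ H x = 0 ∧ h x ≠ 0} :=
      measure_eq_zero_iff_ae_notMem.mp hBnull
    filter_upwards [ae_restrict_of_ae h1, ae_restrict_mem measurableSet_Ioi] with x hxB hx
    simp only [mem_Ioi] at hx
    by_cases hH0 : H x = 0
    · have hh0 : h x = 0 := by
        by_contra hc
        exact hxB ⟨hx, hH0, hc⟩
      simpa [hh0] using (hasSum_zero : HasSum (fun _ : ℕ => (0:ℝ)) 0)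
    · have hHpos : 0 < H x := lt_of_le_of_ne (hHnonneg x hx.le) (Ne.symm hH0)
      set u : ℝ := Real.exp (-(α * H x)) with hu
      have hu0 : 0 < u := Real.exp_pos _
      have hu1 : u < 1 := by
        rw [hu, Real.exp_lt_one_iff]
        nlinarith
      have base := hasSum_genBinom ((n:ℝ)*β - 1) hu0 hu1
      have base2 := base.mul_left
        (Real.exp (-(s*x)) * (α * h x * ((n:ℝ)*β) * u))
      have hfun : ∀ j : ℕ,
          (Real.exp (-(s*x)) * (α * h x * ((n:ℝ)*β) * u)) *
            (genBinom ((n:ℝ)*β - 1) j * (-u)^j)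
          = genBinom ((n:ℝ)*β) (j+1) * (-1)^j *
            (Real.exp (-(s*x)) * (α*((j:ℝ)+1) * h x * Real.exp (-(α*((j:ℝ)+1)*H x)))) := by
        intro j
        have heu : Real.exp (-(α*((j:ℝ)+1)*H x)) = u ^ (j+1) := by
          rw [hu, ← Real.exp_nat_mul]
          congr 1
          push_cast
          ring
        have key := genBinom_shift ((n:ℝ)*β) j
        rw [heu, neg_pow]
        linear_combination (-(Real.exp (-(s*x)) * α * h x * ((-1:ℝ))^j * u^(j+1))) * key
      have hval : (Real.exp (-(s*x)) * (α * h x * ((n:ℝ)*β) * u)) * ((1-u) ^ ((n:ℝ)*β - 1))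
          = Real.exp (-(s*x)) * ((n:ℝ)*α*β * h x * Real.exp (-(α*H x)) *
            (1 - Real.exp (-(α*H x))) ^ ((n:ℝ)*β - 1)) := by
        rw [← hu]
        generalize (1-u) ^ ((n:ℝ)*β - 1) = P
        ring
      rw [← hval]
      simpa only [hfun] using base2
  -- integrability and norms
  have hFint : ∀ j : ℕ, Integrable (fun x => genBinom ((n:ℝ)*β) (j+1) * (-1)^j *
      (Real.exp (-(s*x)) * (α*((j:ℝ)+1) * h x * Real.exp (-(α*((j:ℝ)+1)*H x)))))
      (volume.restrict (Ioi (0:ℝ))) := by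
    intro j
    exact (hint j).const_mul _
  have hnn : ∀ j : ℕ, ∀ᵐ x ∂(volume.restrict (Ioi (0:ℝ))),
      0 ≤ Real.exp (-(s*x)) * (α*((j:ℝ)+1) * h x * Real.exp (-(α*((j:ℝ)+1)*H x))) := by
    intro j
    filter_upwards [ae_restrict_mem measurableSet_Ioi] with x hx
    simp only [mem_Ioi] at hx
    have := hhpos x hx
    positivity
  have hnorm : ∀ j : ℕ, (∫ x in Ioi (0:ℝ), ‖genBinom ((n:ℝ)*β) (j+1) * (-1)^j *
      (Real.exp (-(s*x)) * (α*((j:ℝ)+1) * h x * Real.exp (-(α*((j:ℝ)+1)*H x))))‖)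
      = |genBinom ((n:ℝ)*β) (j+1)| *
        ∫ x in Ioi (0:ℝ), Real.exp (-(s*x)) * (α*((j:ℝ)+1) * h x * Real.exp (-(α*((j:ℝ)+1)*H x))) := by
    intro j
    rw [← integral_const_mul]
    apply integral_congr_ae
    filter_upwards [hnn j] with x hx
    rw [Real.norm_eq_abs, abs_mul, abs_mul, abs_pow, abs_neg, abs_one, one_pow, mul_one,
      abs_of_nonneg hx]
  have hFsum : Summable (fun j : ℕ => ∫ x in Ioi (0:ℝ), ‖genBinom ((n:ℝ)*β) (j+1) * (-1)^j *
      (Real.exp (-(s*x)) * (α*((j:ℝ)+1) * h x * Real.exp (-(α*((j:ℝ)+1)*H x))))‖) :=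
    habs.congr (fun j => (hnorm j).symm)
  have hmain := hasSum_integral_of_summable_integral_norm hFint hFsum
  have he1 : ∀ j : ℕ, (∫ x in Ioi (0:ℝ), genBinom ((n:ℝ)*β) (j+1) * (-1)^j *
      (Real.exp (-(s*x)) * (α*((j:ℝ)+1) * h x * Real.exp (-(α*((j:ℝ)+1)*H x)))))
      = genBinom ((n:ℝ)*β) (j+1) * (-1)^j *
        ∫ x in Ioi (0:ℝ), Real.exp (-(s*x)) * (α*((j:ℝ)+1) * h x * Real.exp (-(α*((j:ℝ)+1)*H x))) := by
    intro j
    exact integral_const_mul _ _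
  have he2 : (∫ x in Ioi (0:ℝ), ∑' j : ℕ, genBinom ((n:ℝ)*β) (j+1) * (-1)^j *
      (Real.exp (-(s*x)) * (α*((j:ℝ)+1) * h x * Real.exp (-(α*((j:ℝ)+1)*H x)))))
      = ∫ x in Ioi (0:ℝ), Real.exp (-(s*x)) * ((n:ℝ)*α*β * h x * Real.exp (-(α*H x)) *
          (1 - Real.exp (-(α*H x))) ^ ((n:ℝ)*β - 1)) := by
    apply integral_congr_ae
    filter_upwards [hae] with x hx
    exact hx.tsum_eq
  rw [← he2]
  simpa only [he1] using hmain
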